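/- arXiv:2101.12306 — 5 statements merged into one kernel-verified Lean document; each statement's English description precedes it below -/
import Mathlib

section
/- Let v(θ) denote the unique positive root of p_θ(v) = (θ/(2σ²))·v³ + (θ/σ²)·(μ²+σ²)·v² + [(θ/(2σ²))·(μ²+σ²)² - (1/2)·μ²·C²]·v - (1/2)·μ²·C². Then v(θ) is strictly decreasing in θ on (0, ∞). -/
/-- If `v θ` is the unique positive root of the cubic `p_θ`, then `v` is strictly
decreasing in `θ` on `(0, ∞)`. -/
theorem stmt_2 (μ σ C : ℝ) (hσ : 0 < σ) (hμ : μ ≠ 0) (hC : C ≠ 0) (v : ℝ → ℝ)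
    (hroot : ∀ θ ∈ Set.Ioi (0 : ℝ), 0 < v θ ∧
      (θ / (2 * σ ^ 2)) * (v θ) ^ 3 + (θ / σ ^ 2) * (μ ^ 2 + σ ^ 2) * (v θ) ^ 2
        + ((θ / (2 * σ ^ 2)) * (μ ^ 2 + σ ^ 2) ^ 2 - (1 / 2) * μ ^ 2 * C ^ 2) * v θ
        - (1 / 2) * μ ^ 2 * C ^ 2 = 0)
    (huniq : ∀ θ ∈ Set.Ioi (0 : ℝ), ∀ w : ℝ, 0 < w →
      (θ / (2 * σ ^ 2)) * w ^ 3 + (θ / σ ^ 2) * (μ ^ 2 + σ ^ 2) * w ^ 2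
        + ((θ / (2 * σ ^ 2)) * (μ ^ 2 + σ ^ 2) ^ 2 - (1 / 2) * μ ^ 2 * C ^ 2) * w
        - (1 / 2) * μ ^ 2 * C ^ 2 = 0 → w = v θ) :
    StrictAntiOn v (Set.Ioi (0 : ℝ)) := by
  have hσ2 : (0:ℝ) < σ ^ 2 := by positivity
  set P : ℝ → ℝ → ℝ := fun θ w =>
    (θ / (2 * σ ^ 2)) * w ^ 3 + (θ / σ ^ 2) * (μ ^ 2 + σ ^ 2) * w ^ 2
      + ((θ / (2 * σ ^ 2)) * (μ ^ 2 + σ ^ 2) ^ 2 - (1 / 2) * μ ^ 2 * C ^ 2) * w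
      - (1 / 2) * μ ^ 2 * C ^ 2 with hPdef
  intro a ha b hb hab
  obtain ⟨hva, hpa⟩ := hroot a ha
  obtain ⟨hvb, hpb⟩ := hroot b hb
  have hpa' : P a (v a) = 0 := hpa
  have hpb' : P b (v b) = 0 := hpb
  -- P b (v a) > 0
  have hdiff : P b (v a) - P a (v a) =
      (b - a) * ((v a) ^ 3 + 2 * (μ ^ 2 + σ ^ 2) * (v a) ^ 2
        + (μ ^ 2 + σ ^ 2) ^ 2 * (v a)) / (2 * σ ^ 2) := by
    simp only [hPdef]
    field_simp
    ring
  have hq : 0 < (v a) ^ 3 + 2 * (μ ^ 2 + σ ^ 2) * (v a) ^ 2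
      + (μ ^ 2 + σ ^ 2) ^ 2 * (v a) := by positivity
  have hPbva : 0 < P b (v a) := by
    have h1 : 0 < (b - a) * ((v a) ^ 3 + 2 * (μ ^ 2 + σ ^ 2) * (v a) ^ 2
        + (μ ^ 2 + σ ^ 2) ^ 2 * (v a)) / (2 * σ ^ 2) := by
      apply div_pos (mul_pos (sub_pos.mpr hab) hq) (by positivity)
    calc (0:ℝ) < P b (v a) - P a (v a) := by rw [hdiff]; exact h1
    _ = P b (v a) := by rw [hpa']; ring
  -- show v b < v a
  by_contra hle
  push_neg at hle
  rcases eq_or_lt_of_le hle with heq | hlt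
  · rw [heq, hpb'] at hPbva; exact lt_irrefl 0 hPbva
  · -- 0 < v a < v b, P b (v a) > 0, P b 0 < 0 : IVT gives root in (0, v a], contradiction
    have hcont : Continuous (P b) := by
      simp only [hPdef]; fun_prop
    have hP0 : P b 0 < 0 := by
      simp only [hPdef]
      have : (0:ℝ) < (1 / 2) * μ ^ 2 * C ^ 2 := by positivity
      simp; positivity
    have hsub := intermediate_value_Icc (le_of_lt hva) hcont.continuousOn
    have h0mem : (0:ℝ) ∈ Set.Icc (P b 0) (P b (v a)) := ⟨le_of_lt hP0, le_of_lt hPbva⟩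
    obtain ⟨w, hwmem, hweq⟩ := hsub h0mem
    have hwpos : 0 < w := by
      rcases eq_or_lt_of_le hwmem.1 with h | h
      · exfalso; rw [← h] at hweq; rw [hweq] at hP0; exact lt_irrefl 0 hP0
      · exact h
    have := huniq b hb w hwpos hweq
    rw [this] at hwmem
    exact absurd hwmem.2 (not_le.mpr hlt)
end

section
/- Let v(θ) be the unique positive root of the cubic p_θ(v) = (θ/(2σ²))v³ + (θ/σ²)(μ²+σ²)v² + [(θ/(2σ²))(μ²+σ²)² - (1/2)μ²C²]v - (1/2)μ²C². Then v(θ) → 0 as θ → ∞ and v(θ) → ∞ as θ → 0⁺. -/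
open Filter

private lemma my_sqrt_atTop : Filter.Tendsto Real.sqrt Filter.atTop Filter.atTop := by
  rw [Filter.tendsto_atTop_atTop]
  intro b
  refine ⟨max (b ^ 2) 0, fun a ha => ?_⟩
  have h1 : Real.sqrt (b ^ 2) ≤ Real.sqrt a := Real.sqrt_le_sqrt (le_trans (le_max_left _ _) ha)
  rw [Real.sqrt_sq_eq_abs] at h1
  exact le_trans (le_abs_self b) h1

/-- If `v θ` is the unique positive root of the cubic `p_θ`, then `v θ → 0` as
`θ → ∞` and `v θ → ∞` as `θ → 0⁺`. -/
theorem stmt_3 (μ σ C : ℝ) (hσ : 0 < σ) (hμ : μ ≠ 0) (hC : C ≠ 0) (v : ℝ → ℝ)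
    (hroot : ∀ θ ∈ Set.Ioi (0 : ℝ), 0 < v θ ∧
      (θ / (2 * σ ^ 2)) * (v θ) ^ 3 + (θ / σ ^ 2) * (μ ^ 2 + σ ^ 2) * (v θ) ^ 2
        + ((θ / (2 * σ ^ 2)) * (μ ^ 2 + σ ^ 2) ^ 2 - (1 / 2) * μ ^ 2 * C ^ 2) * v θ
        - (1 / 2) * μ ^ 2 * C ^ 2 = 0)
    (huniq : ∀ θ ∈ Set.Ioi (0 : ℝ), ∀ w : ℝ, 0 < w →
      (θ / (2 * σ ^ 2)) * w ^ 3 + (θ / σ ^ 2) * (μ ^ 2 + σ ^ 2) * w ^ 2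
        + ((θ / (2 * σ ^ 2)) * (μ ^ 2 + σ ^ 2) ^ 2 - (1 / 2) * μ ^ 2 * C ^ 2) * w
        - (1 / 2) * μ ^ 2 * C ^ 2 = 0 → w = v θ) :
    Filter.Tendsto v Filter.atTop (nhds 0) ∧
      Filter.Tendsto v (nhdsWithin 0 (Set.Ioi 0)) Filter.atTop := by
  have hσ2 : (0:ℝ) < σ ^ 2 := by positivity
  set m : ℝ := μ ^ 2 + σ ^ 2 with hm
  have hm0 : 0 < m := by positivity
  set K : ℝ := (1 / 2) * μ ^ 2 * C ^ 2 with hK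
  have hK0 : 0 < K := by
    have h1 : (0:ℝ) < μ ^ 2 := by positivity
    have h2 : (0:ℝ) < C ^ 2 := by positivity
    rw [hK]; positivity
  -- key identity
  have key : ∀ θ : ℝ, 0 < θ → θ * v θ * (v θ + m) ^ 2 = 2 * σ ^ 2 * K * (v θ + 1) := by
    intro θ hθ
    have h := (hroot θ hθ).2
    have h2 : (2 * σ ^ 2) ≠ 0 := by positivity
    have h3 : (σ ^ 2) ≠ 0 := ne_of_gt hσ2
    field_simp at h
    apply mul_left_cancel₀ (a := 2 * σ ^ 2 * σ ^ 2) (by positivity)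
    linear_combination (2 * σ ^ 2 * σ ^ 2) * h
  have upper : ∀ θ : ℝ, 0 < θ → v θ * (θ * m ^ 2 - 2 * σ ^ 2 * K) ≤ 2 * σ ^ 2 * K := by
    intro θ hθ
    have hv := (hroot θ hθ).1
    have hkey := key θ hθ
    nlinarith [mul_nonneg (mul_pos hθ hv).le
      (by nlinarith : (0:ℝ) ≤ (v θ) ^ 2 + 2 * v θ * m), mul_pos hK0 hv]
  have lower : ∀ θ : ℝ, 0 < θ → 2 * σ ^ 2 * K ≤ θ * (v θ + m) ^ 2 := by
    intro θ hθ
    have hv := (hroot θ hθ).1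
    have hkey := key θ hθ
    by_contra hcon
    push_neg at hcon
    nlinarith [mul_pos hv (sub_pos.mpr hcon)]
  constructor
  · -- θ → ∞
    have hg : Tendsto (fun θ : ℝ => 2 * σ ^ 2 * K / (θ * m ^ 2 - 2 * σ ^ 2 * K))
        atTop (nhds 0) := by
      apply Tendsto.div_atTop tendsto_const_nhds
      apply tendsto_atTop_add_const_right
      exact Tendsto.atTop_mul_const (by positivity) tendsto_id
    apply tendsto_of_tendsto_of_tendsto_of_le_of_le' tendsto_const_nhds hg
    · filter_upwards [eventually_gt_atTop (0:ℝ)] with θ hθ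
      exact (hroot θ hθ).1.le
    · filter_upwards [eventually_gt_atTop ((2 * σ ^ 2 * K + 1) / m ^ 2)] with θ hθ
      have hθ0 : 0 < θ := lt_trans (by positivity) hθ
      have hd : 0 < θ * m ^ 2 - 2 * σ ^ 2 * K := by
        have := (div_lt_iff₀ (by positivity : (0:ℝ) < m ^ 2)).mp hθ
        linarith
      rw [le_div_iff₀ hd]
      exact upper θ hθ0
  · -- θ → 0⁺
    have hg : Tendsto (fun θ : ℝ => Real.sqrt (2 * σ ^ 2 * K / θ) - m)
        (nhdsWithin 0 (Set.Ioi 0)) atTop := by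
      apply tendsto_atTop_add_const_right
      apply my_sqrt_atTop.comp
      have : Tendsto (fun θ : ℝ => 2 * σ ^ 2 * K * θ⁻¹) (nhdsWithin 0 (Set.Ioi 0)) atTop :=
        Tendsto.const_mul_atTop (by positivity) tendsto_inv_nhdsGT_zero
      exact this.congr (fun θ => by rw [div_eq_mul_inv])
    apply tendsto_atTop_mono' _ _ hg
    filter_upwards [self_mem_nhdsWithin] with θ hθ
    have hθ0 : (0:ℝ) < θ := hθ
    have hv := (hroot θ hθ0).1
    have h1 : 2 * σ ^ 2 * K / θ ≤ (v θ + m) ^ 2 := by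
      rw [div_le_iff₀ hθ0]
      nlinarith [lower θ hθ0]
    have h2 : Real.sqrt (2 * σ ^ 2 * K / θ) ≤ Real.sqrt ((v θ + m) ^ 2) :=
      Real.sqrt_le_sqrt h1
    rw [Real.sqrt_sq (by positivity)] at h2
    linarith
end

section
/- Define φ*(θ) = μ·C / (v(θ) + μ² + σ²), where v(θ) is the unique positive root of the cubic p_θ as above, μ > 0, C > 0, σ > 0. Then (i) φ*(θ) > 0 for all θ > 0; (ii) φ*(θ) is strictly increasing in θ; (iii) φ*(θ) → μC/(μ² + σ²) as θ → ∞; (iv) φ*(θ) → 0 as θ → 0⁺. -/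
/-- Key comparison lemma: if `t * (w * (w+S)^2) = A * (w+1)` defines `t = g(w)`, then
`g` is (weakly) antitone on positive reals. -/
lemma key_cmp (S A a b ta tb : ℝ) (hS : 0 < S) (hA : 0 < A) (ha : 0 < a) (hab : a ≤ b)
    (hea : ta * (a * (a + S) ^ 2) = A * (a + 1))
    (heb : tb * (b * (b + S) ^ 2) = A * (b + 1)) : tb ≤ ta := by
  have hb : 0 < b := lt_of_lt_of_le ha hab
  have hpoly : A * (b + 1) * (a * (a + S) ^ 2) ≤ A * (a + 1) * (b * (b + S) ^ 2) := by
    nlinarith [mul_pos ha hb, mul_pos hS ha, mul_pos hS hb,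
      mul_nonneg (mul_nonneg hA.le (sub_nonneg.2 hab)) (mul_pos (mul_pos ha hb) (by linarith : (0:ℝ) < a + b)).le,
      mul_nonneg (mul_nonneg hA.le (sub_nonneg.2 hab)) (mul_pos hS (mul_pos ha hb)).le,
      mul_nonneg (mul_nonneg hA.le (sub_nonneg.2 hab)) (mul_pos hS (by linarith : (0:ℝ) < a + b)).le,
      mul_nonneg (mul_nonneg hA.le (sub_nonneg.2 hab)) (sq_nonneg S),
      mul_nonneg (mul_nonneg hA.le (sub_nonneg.2 hab)) (by nlinarith : (0:ℝ) ≤ a^2 + a*b + b^2)]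
  have h2 : tb * (b * (b + S) ^ 2) * (a * (a + S) ^ 2) ≤ ta * (a * (a + S) ^ 2) * (b * (b + S) ^ 2) := by
    rw [hea, heb]; exact hpoly
  exact le_of_mul_le_mul_right (by nlinarith [h2] :
    tb * (a * (a + S) ^ 2 * (b * (b + S) ^ 2)) ≤ ta * (a * (a + S) ^ 2 * (b * (b + S) ^ 2))) (by positivity)

/-- Properties of the optimal portfolio weight `φ*(θ) = μC/(v(θ) + μ² + σ²)`:
positivity, strict monotonicity in `θ`, limit `μC/(μ²+σ²)` as `θ → ∞`, and
limit `0` as `θ → 0⁺`. -/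
theorem stmt_4 (μ σ C : ℝ) (hσ : 0 < σ) (hμ : 0 < μ) (hC : 0 < C) (v : ℝ → ℝ)
    (hroot : ∀ θ ∈ Set.Ioi (0 : ℝ), 0 < v θ ∧
      (θ / (2 * σ ^ 2)) * (v θ) ^ 3 + (θ / σ ^ 2) * (μ ^ 2 + σ ^ 2) * (v θ) ^ 2
        + ((θ / (2 * σ ^ 2)) * (μ ^ 2 + σ ^ 2) ^ 2 - (1 / 2) * μ ^ 2 * C ^ 2) * v θ
        - (1 / 2) * μ ^ 2 * C ^ 2 = 0)
    (huniq : ∀ θ ∈ Set.Ioi (0 : ℝ), ∀ w : ℝ, 0 < w →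
      (θ / (2 * σ ^ 2)) * w ^ 3 + (θ / σ ^ 2) * (μ ^ 2 + σ ^ 2) * w ^ 2
        + ((θ / (2 * σ ^ 2)) * (μ ^ 2 + σ ^ 2) ^ 2 - (1 / 2) * μ ^ 2 * C ^ 2) * w
        - (1 / 2) * μ ^ 2 * C ^ 2 = 0 → w = v θ)
    (φ : ℝ → ℝ) (hφ : ∀ θ, φ θ = μ * C / (v θ + μ ^ 2 + σ ^ 2)) :
    (∀ θ ∈ Set.Ioi (0 : ℝ), 0 < φ θ) ∧
    StrictMonoOn φ (Set.Ioi (0 : ℝ)) ∧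
    Filter.Tendsto φ Filter.atTop (nhds (μ * C / (μ ^ 2 + σ ^ 2))) ∧
    Filter.Tendsto φ (nhdsWithin 0 (Set.Ioi 0)) (nhds 0) := by
  set S : ℝ := μ ^ 2 + σ ^ 2 with hSdef
  set A : ℝ := σ ^ 2 * μ ^ 2 * C ^ 2 with hAdef
  have hS : 0 < S := by positivity
  have hA : 0 < A := by positivity
  -- positivity of v on (0,∞)
  have hvpos : ∀ θ ∈ Set.Ioi (0 : ℝ), 0 < v θ := fun θ hθ => (hroot θ hθ).1
  -- key identity: θ * v(v+S)² = A (v+1)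
  have hident : ∀ θ ∈ Set.Ioi (0 : ℝ), θ * (v θ * (v θ + S) ^ 2) = A * (v θ + 1) := by
    intro θ hθ
    have h := (hroot θ hθ).2
    have hσ2 : (σ:ℝ) ^ 2 ≠ 0 := by positivity
    rw [hSdef, hAdef]
    field_simp at h
    have h8 : (8 : ℝ) * σ ^ 4 ≠ 0 := by positivity
    apply mul_left_cancel₀ h8
    rw [hSdef] at h
    linear_combination (8 * σ ^ 4) * h
  -- the "g" function value at a point w, satisfying the identity by construction
  have hg : ∀ w : ℝ, 0 < w →
      (A * (w + 1) / (w * (w + S) ^ 2)) * (w * (w + S) ^ 2) = A * (w + 1) := by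
    intro w hw
    have : w * (w + S) ^ 2 ≠ 0 := by positivity
    field_simp
  have hgpos : ∀ w : ℝ, 0 < w → 0 < A * (w + 1) / (w * (w + S) ^ 2) := by
    intro w hw; positivity
  -- v is antitone: θ1 < θ2 → v θ2 < v θ1
  have hvanti : ∀ θ₁ ∈ Set.Ioi (0 : ℝ), ∀ θ₂ ∈ Set.Ioi (0 : ℝ), θ₁ < θ₂ → v θ₂ < v θ₁ := by
    intro θ₁ h₁ θ₂ h₂ hlt
    by_contra hcon
    push_neg at hcon
    have := key_cmp S A (v θ₁) (v θ₂) θ₁ θ₂ hS hA (hvpos θ₁ h₁) hcon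
      (hident θ₁ h₁) (hident θ₂ h₂)
    linarith
  -- (i) positivity of φ
  have hφpos : ∀ θ ∈ Set.Ioi (0 : ℝ), 0 < φ θ := by
    intro θ hθ
    rw [hφ θ]
    have := hvpos θ hθ
    have hd : 0 < v θ + μ ^ 2 + σ ^ 2 := by positivity
    positivity
  refine ⟨hφpos, ?_, ?_, ?_⟩
  · -- (ii) strict monotonicity
    intro θ₁ h₁ θ₂ h₂ hlt
    rw [hφ θ₁, hφ θ₂]
    have hv1 := hvpos θ₁ h₁
    have hv2 := hvpos θ₂ h₂
    have hvlt := hvanti θ₁ h₁ θ₂ h₂ hlt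
    apply div_lt_div_of_pos_left (by positivity) (by positivity)
    linarith
  · -- (iii) limit at ∞ : v → 0
    have hvto0 : Filter.Tendsto v Filter.atTop (nhds 0) := by
      rw [Metric.tendsto_atTop]
      intro ε hε
      refine ⟨A * (ε + 1) / (ε * (ε + S) ^ 2) + 1, fun θ hθ => ?_⟩
      have hθpos : (0:ℝ) < θ := lt_of_lt_of_le (by positivity) hθ
      have hθmem : θ ∈ Set.Ioi (0:ℝ) := hθpos
      have hvθ := hvpos θ hθmem
      have hvlt : v θ < ε := by
        by_contra hcon
        push_neg at hcon
        have := key_cmp S A ε (v θ) (A * (ε + 1) / (ε * (ε + S) ^ 2)) θ hS hA hε hcon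
          (hg ε hε) (hident θ hθmem)
        linarith
      rw [Real.dist_eq, abs_of_pos (by linarith : (0:ℝ) < v θ - 0)]
      linarith
    have : Filter.Tendsto (fun θ => μ * C / (v θ + μ ^ 2 + σ ^ 2)) Filter.atTop
        (nhds (μ * C / (μ ^ 2 + σ ^ 2))) := by
      have hden : Filter.Tendsto (fun θ => v θ + μ ^ 2 + σ ^ 2) Filter.atTop
          (nhds (μ ^ 2 + σ ^ 2)) := by
        have := (hvto0.add_const (μ ^ 2)).add_const (σ ^ 2)
        simpa using this
      exact Filter.Tendsto.div tendsto_const_nhds hden (by positivity)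
    exact this.congr (fun θ => (hφ θ).symm)
  · -- (iv) limit at 0⁺ : v → ∞
    have hvtop : Filter.Tendsto v (nhdsWithin 0 (Set.Ioi 0)) Filter.atTop := by
      rw [Filter.tendsto_atTop]
      intro M
      set M' : ℝ := max M 1 with hM'
      have hM'pos : 0 < M' := lt_of_lt_of_le one_pos (le_max_right M 1)
      set δ : ℝ := A * (M' + 1) / (M' * (M' + S) ^ 2) with hδ
      have hδpos : 0 < δ := hgpos M' hM'pos
      have hmem : Set.Ioo (0:ℝ) δ ∈ nhdsWithin 0 (Set.Ioi 0) :=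
        Ioo_mem_nhdsGT_of_mem ⟨le_refl 0, hδpos⟩
      filter_upwards [hmem] with θ hθ
      have hθmem : θ ∈ Set.Ioi (0:ℝ) := hθ.1
      have hvθ := hvpos θ hθmem
      have : M' ≤ v θ := by
        by_contra hcon
        push_neg at hcon
        have := key_cmp S A (v θ) M' θ δ hS hA hvθ hcon.le
          (hident θ hθmem) (hg M' hM'pos)
        linarith [hθ.2]
      exact le_trans (le_max_left M 1) this
    have hden : Filter.Tendsto (fun θ => v θ + μ ^ 2 + σ ^ 2) (nhdsWithin 0 (Set.Ioi 0))
        Filter.atTop := by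
      apply Filter.tendsto_atTop_add_const_right
      exact Filter.tendsto_atTop_add_const_right _ _ hvtop
    have : Filter.Tendsto (fun θ => μ * C / (v θ + μ ^ 2 + σ ^ 2)) (nhdsWithin 0 (Set.Ioi 0))
        (nhds 0) := Filter.Tendsto.div_atTop tendsto_const_nhds hden
    exact this.congr (fun θ => (hφ θ).symm)
end

section
/- For each θ > 0, the function g(s) = (1/2)·μ²·C²·(1/s) + (θ/2)·[ (s - μ²)/σ² - 1 - log((s - μ²)/σ²) ] is strictly convex on (μ², ∞), and its unique minimizer s(θ) satisfies s(θ) > μ² + σ², provided μ ≠ 0 and C ≠ 0. -/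
open Real Set

private lemma deriv1 (μ σ θ C : ℝ) (hσ : 0 < σ) (hμ : μ ≠ 0) {s : ℝ} (hs : μ ^ 2 < s) :
    HasDerivAt (fun s : ℝ =>
        (1 / 2) * μ ^ 2 * C ^ 2 * (1 / s)
          + (θ / 2) * ((s - μ ^ 2) / σ ^ 2 - 1 - Real.log ((s - μ ^ 2) / σ ^ 2)))
      ((1 / 2) * μ ^ 2 * C ^ 2 * (-(1 / s ^ 2))
          + (θ / 2) * (1 / σ ^ 2 - 1 / (s - μ ^ 2))) s := by
  have hμ2 : 0 < μ ^ 2 := by positivity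
  have hs0 : 0 < s := hμ2.trans hs
  have hsub : 0 < s - μ ^ 2 := by linarith
  have hσ2 : (0:ℝ) < σ ^ 2 := by positivity
  have h1 : HasDerivAt (fun s : ℝ => 1 / s) (-(1 / s ^ 2)) s := by
    simpa [one_div] using hasDerivAt_inv hs0.ne'
  have hd : HasDerivAt (fun s : ℝ => (s - μ ^ 2) / σ ^ 2) (1 / σ ^ 2) s := by
    simpa using ((hasDerivAt_id s).sub_const (μ ^ 2)).div_const (σ ^ 2)
  have hlogarg : (s - μ ^ 2) / σ ^ 2 ≠ 0 := by positivity
  have h2 : HasDerivAt (fun s : ℝ => Real.log ((s - μ ^ 2) / σ ^ 2)) (1 / (s - μ ^ 2)) s := by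
    have := hd.log hlogarg
    convert this using 1
    field_simp
  have := (h1.const_mul ((1 / 2) * μ ^ 2 * C ^ 2)).add
    (((hd.sub_const 1).sub h2).const_mul (θ / 2))
  convert this using 1
  · rfl
  · rfl
  · rfl

private lemma deriv2 (μ σ θ C : ℝ) (hσ : 0 < σ) (hμ : μ ≠ 0) {s : ℝ} (hs : μ ^ 2 < s) :
    HasDerivAt (fun s : ℝ =>
        (1 / 2) * μ ^ 2 * C ^ 2 * (-(1 / s ^ 2))
          + (θ / 2) * (1 / σ ^ 2 - 1 / (s - μ ^ 2)))
      ((1 / 2) * μ ^ 2 * C ^ 2 * (2 / s ^ 3)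
          + (θ / 2) * (1 / (s - μ ^ 2) ^ 2)) s := by
  have hμ2 : 0 < μ ^ 2 := by positivity
  have hs0 : 0 < s := hμ2.trans hs
  have hsub : 0 < s - μ ^ 2 := by linarith
  have h1 : HasDerivAt (fun s : ℝ => -(1 / s ^ 2)) (2 / s ^ 3) s := by
    have h := ((hasDerivAt_pow 2 s).inv (by positivity)).neg
    convert h using 1
    · rfl
    · rfl
    · ext x; simp [one_div]
    · field_simp; ring
  have h2 : HasDerivAt (fun s : ℝ => 1 / (s - μ ^ 2)) (-(1 / (s - μ ^ 2) ^ 2)) s := by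
    have h := ((hasDerivAt_id s).sub_const (μ ^ 2)).inv hsub.ne'
    convert h using 1
    · rfl
    · rfl
    · ext x; simp [one_div]
    · simp only [id, neg_div]
  have := (h1.const_mul ((1 / 2) * μ ^ 2 * C ^ 2)).add
    (((hasDerivAt_const s (1 / σ ^ 2)).sub h2).const_mul (θ / 2))
  convert this using 1
  · rfl
  · rfl
  · rfl
  ring

/-- `g(s) = (1/2)μ²C²/s + (θ/2)[(s-μ²)/σ² - 1 - log((s-μ²)/σ²)]` is strictly
convex on `(μ², ∞)`, and any minimizer `s` of `g` on `(μ², ∞)` satisfies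
`s > μ² + σ²`. -/
theorem stmt_6 (μ σ θ C : ℝ) (hσ : 0 < σ) (hθ : 0 < θ) (hμ : μ ≠ 0) (hC : C ≠ 0) :
    StrictConvexOn ℝ (Set.Ioi (μ ^ 2))
      (fun s : ℝ =>
        (1 / 2) * μ ^ 2 * C ^ 2 * (1 / s)
          + (θ / 2) * ((s - μ ^ 2) / σ ^ 2 - 1 - Real.log ((s - μ ^ 2) / σ ^ 2))) ∧
    ∀ s ∈ Set.Ioi (μ ^ 2),
      IsMinOn
        (fun s : ℝ =>
          (1 / 2) * μ ^ 2 * C ^ 2 * (1 / s)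
            + (θ / 2) * ((s - μ ^ 2) / σ ^ 2 - 1 - Real.log ((s - μ ^ 2) / σ ^ 2)))
        (Set.Ioi (μ ^ 2)) s →
      μ ^ 2 + σ ^ 2 < s := by
  have hμ2 : 0 < μ ^ 2 := by positivity
  set f : ℝ → ℝ := fun s : ℝ =>
      (1 / 2) * μ ^ 2 * C ^ 2 * (1 / s)
        + (θ / 2) * ((s - μ ^ 2) / σ ^ 2 - 1 - Real.log ((s - μ ^ 2) / σ ^ 2)) with hf
  set f' : ℝ → ℝ := fun s : ℝ =>
      (1 / 2) * μ ^ 2 * C ^ 2 * (-(1 / s ^ 2)) + (θ / 2) * (1 / σ ^ 2 - 1 / (s - μ ^ 2)) with hf'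
  have hderiv : ∀ x ∈ Set.Ioi (μ ^ 2), deriv f x = f' x := fun x hx =>
    (deriv1 μ σ θ C hσ hμ hx).deriv
  constructor
  · apply strictConvexOn_of_deriv2_pos (convex_Ioi _)
    · intro x hx
      exact (deriv1 μ σ θ C hσ hμ hx).differentiableAt.continuousAt.continuousWithinAt
    · intro x hx
      rw [interior_Ioi] at hx
      have hx' : μ ^ 2 < x := hx
      have hsub : 0 < x - μ ^ 2 := by linarith
      have hx0 : 0 < x := hμ2.trans hx'
      have heq : deriv f =ᶠ[nhds x] f' := by
        filter_upwards [IsOpen.mem_nhds isOpen_Ioi hx] with y hy using hderiv y hy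
      have : deriv^[2] f x = deriv f' x := by
        show deriv (deriv f) x = deriv f' x
        exact Filter.EventuallyEq.deriv_eq heq
      rw [this, (deriv2 μ σ θ C hσ hμ hx').deriv]
      positivity
  · intro s hs hmin
    have hs' : μ ^ 2 < s := hs
    have hs0 : 0 < s := hμ2.trans hs'
    have hsub : 0 < s - μ ^ 2 := by linarith
    have hloc : IsLocalMin f s := hmin.isLocalMin (IsOpen.mem_nhds isOpen_Ioi hs)
    have hzero : f' s = 0 := hloc.hasDerivAt_eq_zero (deriv1 μ σ θ C hσ hμ hs')
    by_contra h
    push_neg at h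
    have h2 : s - μ ^ 2 ≤ σ ^ 2 := by linarith
    have h3 : 1 / σ ^ 2 ≤ 1 / (s - μ ^ 2) := one_div_le_one_div_of_le hsub h2
    have h4 : 0 < (1 / 2) * μ ^ 2 * C ^ 2 * (1 / s ^ 2) := by positivity
    have h5 : 0 ≤ θ / 2 := by positivity
    have hz : (1 / 2) * μ ^ 2 * C ^ 2 * (-(1 / s ^ 2))
        + (θ / 2) * (1 / σ ^ 2 - 1 / (s - μ ^ 2)) = 0 := hzero
    nlinarith [mul_nonneg h5 (sub_nonneg.mpr h3)]
end

section
/- Let L(m̃, s̃; θ) = (1/2)·m̃²/(m̃² + s̃)·C² - (1/2)C² + (θ/2)·[ s̃/σ² + (m̃ - μ)²/σ² - log(s̃/σ²) - 1 ] for m̃ ∈ ℝ, s̃ > 0, with C > 0, μ > 0, σ > 0, θ > 0. At any interior minimizer (μ_u, σ_u²), the first-order condition in s̃ gives (1/2)·(μ_u²/(μ_u² + σ_u²)²)·C² = (θ/2)·(1/σ² - 1/σ_u²), and consequently σ_u² > σ² whenever μ_u ≠ 0. -/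
/-- Multiplier (unconstrained) portfolio problem: at any interior minimizer
`(μ_u, σ_u²)` of
`L(m̃, s̃) = (1/2)(m̃²/(m̃²+s̃))C² - (1/2)C² + (θ/2)[s̃/σ² + (m̃-μ)²/σ² - log(s̃/σ²) - 1]`,
the first-order condition in `s̃` gives
`(1/2)(μ_u²/(μ_u²+σ_u²)²)C² = (θ/2)(1/σ² - 1/σ_u²)`, and consequently
`σ_u² > σ²` whenever `μ_u ≠ 0`. -/
theorem stmt_16 (μ σ θ C : ℝ) (hC : 0 < C) (hμ : 0 < μ) (hσ : 0 < σ) (hθ : 0 < θ)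
    (L : ℝ → ℝ → ℝ)
    (hL : ∀ m s : ℝ, L m s =
      (1 / 2) * (m ^ 2 / (m ^ 2 + s)) * C ^ 2 - (1 / 2) * C ^ 2
        + (θ / 2) * (s / σ ^ 2 + (m - μ) ^ 2 / σ ^ 2 - Real.log (s / σ ^ 2) - 1))
    (mu su : ℝ) (hsu : 0 < su)
    (hmin : IsLocalMin (fun p : ℝ × ℝ => L p.1 p.2) (mu, su)) :
    (1 / 2) * (mu ^ 2 / (mu ^ 2 + su) ^ 2) * C ^ 2
      = (θ / 2) * (1 / σ ^ 2 - 1 / su) ∧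
    (mu ≠ 0 → σ ^ 2 < su) := by
  have hden : (0:ℝ) < mu ^ 2 + su := by positivity
  have hσ2 : (0:ℝ) < σ ^ 2 := by positivity
  -- restrict to the s-direction
  have hg : IsLocalMin (fun s : ℝ => L mu s) su := by
    have hc : Continuous (fun s : ℝ => ((mu, s) : ℝ × ℝ)) := by continuity
    exact hmin.comp_continuous hc.continuousAt
  -- derivative of the s-slice at su
  have hd : HasDerivAt (fun s : ℝ => L mu s)
      (-(1 / 2) * mu ^ 2 * C ^ 2 / (mu ^ 2 + su) ^ 2 + (θ / 2) * (1 / σ ^ 2 - 1 / su)) su := by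
    have h1 : HasDerivAt (fun s : ℝ => mu ^ 2 + s) 1 su :=
      (hasDerivAt_id su).const_add _
    have h2 : HasDerivAt (fun s : ℝ => mu ^ 2 / (mu ^ 2 + s))
        (-(mu ^ 2) / (mu ^ 2 + su) ^ 2) su := by
      have := (hasDerivAt_const su (mu ^ 2)).fun_div h1 (ne_of_gt hden)
      simpa using this
    have h3 : HasDerivAt (fun s : ℝ => Real.log (s / σ ^ 2)) (1 / su) su := by
      have hi : HasDerivAt (fun s : ℝ => s / σ ^ 2) (1 / σ ^ 2) su := by
        simpa using (hasDerivAt_id su).div_const (σ ^ 2)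
      have hln : HasDerivAt (fun s : ℝ => Real.log (s / σ ^ 2))
          ((su / σ ^ 2)⁻¹ * (1 / σ ^ 2)) su :=
        ((Real.hasDerivAt_log (by positivity : su / σ ^ 2 ≠ 0)).comp su hi : HasDerivAt (Real.log ∘ fun s => s / σ ^ 2) _ su)
      convert hln using 1
      field_simp
    have h4 : HasDerivAt (fun s : ℝ =>
        s / σ ^ 2 + (mu - μ) ^ 2 / σ ^ 2 - Real.log (s / σ ^ 2) - 1)
        (1 / σ ^ 2 - 1 / su) su := by
      have hi : HasDerivAt (fun s : ℝ => s / σ ^ 2) (1 / σ ^ 2) su := by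
        simpa using (hasDerivAt_id su).div_const (σ ^ 2)
      simpa using ((hi.add_const ((mu - μ) ^ 2 / σ ^ 2)).sub h3).sub_const 1
    have hfull := (((h2.const_mul (1/2 : ℝ)).mul_const (C ^ 2)).sub_const
        ((1 / 2) * C ^ 2)).fun_add (h4.const_mul (θ / 2))
    have heq : (fun s : ℝ => L mu s) = fun s : ℝ =>
        (1 / 2) * (mu ^ 2 / (mu ^ 2 + s)) * C ^ 2 - (1 / 2) * C ^ 2
          + (θ / 2) * (s / σ ^ 2 + (mu - μ) ^ 2 / σ ^ 2 - Real.log (s / σ ^ 2) - 1) := by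
      funext s; exact hL mu s
    rw [heq]
    exact hfull.congr_deriv (by ring)
  have hzero := hg.hasDerivAt_eq_zero hd
  have hfoc : (1 / 2) * (mu ^ 2 / (mu ^ 2 + su) ^ 2) * C ^ 2
      = (θ / 2) * (1 / σ ^ 2 - 1 / su) := by
    have : (1 / 2) * (mu ^ 2 / (mu ^ 2 + su) ^ 2) * C ^ 2
        = (1 / 2) * mu ^ 2 * C ^ 2 / (mu ^ 2 + su) ^ 2 := by ring
    linear_combination this - hzero
  refine ⟨hfoc, fun hmu => ?_⟩
  have hmu2 : (0:ℝ) < mu ^ 2 := by positivity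
  have hpos : (0:ℝ) < (1 / 2) * (mu ^ 2 / (mu ^ 2 + su) ^ 2) * C ^ 2 := by positivity
  rw [hfoc] at hpos
  have hx : (0:ℝ) < 1 / σ ^ 2 - 1 / su := by nlinarith [hpos, hθ]
  exact lt_of_one_div_lt_one_div hsu (by linarith)
end
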